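/- (Upper bound in index lists) Let u, i, c be nonzero vectors in ℝ^f with θ_ui, θ_ic, θ_uc the pairwise angles, and let θ_b ∈ [0, π] satisfy θ_b ≥ θ_uc. Define r*_ci = ‖i‖·cos(θ_ic − θ_b) if θ_b < θ_ic and r*_ci = ‖i‖ otherwise. Then r*_ci ≥ (u · i)/‖u‖. -/

import Mathlib

open scoped RealInnerProductSpace

private lemma sph_aux {E : Type*} [NormedAddCommGroup E] [InnerProductSpace ℝ E]
    (a b c : E) (ha : ‖a‖ = 1) (hb : ‖b‖ = 1) (hc : ‖c‖ = 1) :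
    ⟪a, b⟫ ≤ ⟪a, c⟫ * ⟪b, c⟫ + Real.sqrt (1 - ⟪a, c⟫ ^ 2) * Real.sqrt (1 - ⟪b, c⟫ ^ 2) := by
  have h1 : ⟪a - ⟪a, c⟫ • c, b - ⟪b, c⟫ • c⟫ ≤ ‖a - ⟪a, c⟫ • c‖ * ‖b - ⟪b, c⟫ • c‖ :=
    real_inner_le_norm _ _
  have hna : ‖a - ⟪a, c⟫ • c‖ = Real.sqrt (1 - ⟪a, c⟫ ^ 2) := by
    rw [norm_eq_sqrt_real_inner]
    congr 1
    simp only [inner_sub_left, inner_sub_right, real_inner_smul_left, real_inner_smul_right,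
      real_inner_self_eq_norm_sq, ha, hc, real_inner_comm c a, norm_smul, Real.norm_eq_abs, sq_abs, mul_one, mul_pow, one_pow]
    ring
  have hnb : ‖b - ⟪b, c⟫ • c‖ = Real.sqrt (1 - ⟪b, c⟫ ^ 2) := by
    rw [norm_eq_sqrt_real_inner]
    congr 1
    simp only [inner_sub_left, inner_sub_right, real_inner_smul_left, real_inner_smul_right,
      real_inner_self_eq_norm_sq, hb, hc, real_inner_comm c b, norm_smul, Real.norm_eq_abs, sq_abs, mul_one, mul_pow, one_pow]
    ring
  have h2 : ⟪a - ⟪a, c⟫ • c, b - ⟪b, c⟫ • c⟫ = ⟪a, b⟫ - ⟪a, c⟫ * ⟪b, c⟫ := by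
    simp only [inner_sub_left, inner_sub_right, real_inner_smul_left, real_inner_smul_right,
      real_inner_self_eq_norm_sq, hc, real_inner_comm c a, real_inner_comm c b]
    ring
  rw [h2, hna, hnb] at h1
  linarith

theorem simdex_index_upper_bound {f : ℕ} (u i c : EuclideanSpace ℝ (Fin f))
    (hu : u ≠ 0) (hi : i ≠ 0) (hc : c ≠ 0) (θb : ℝ)
    (hb : θb ∈ Set.Icc 0 Real.pi)
    (hbound : Real.arccos (⟪u, c⟫ / (‖u‖ * ‖c‖)) ≤ θb) :
    ⟪u, i⟫ / ‖u‖ ≤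
      (if θb < Real.arccos (⟪i, c⟫ / (‖i‖ * ‖c‖)) then
        ‖i‖ * Real.cos (Real.arccos (⟪i, c⟫ / (‖i‖ * ‖c‖)) - θb)
      else ‖i‖) := by
  have hun : (0:ℝ) < ‖u‖ := norm_pos_iff.mpr hu
  have hin : (0:ℝ) < ‖i‖ := norm_pos_iff.mpr hi
  have hcn : (0:ℝ) < ‖c‖ := norm_pos_iff.mpr hc
  set x : ℝ := ⟪u, c⟫ / (‖u‖ * ‖c‖) with hxdef
  set y : ℝ := ⟪i, c⟫ / (‖i‖ * ‖c‖) with hydef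
  set A : ℝ := Real.arccos y with hA
  set B : ℝ := Real.arccos x with hB
  by_cases hcase : θb < A
  · rw [if_pos hcase]
    -- unit vectors
    set a := ‖u‖⁻¹ • u with ha'
    set b := ‖i‖⁻¹ • i with hb'
    set cv := ‖c‖⁻¹ • c with hcv'
    have hna : ‖a‖ = 1 := norm_smul_inv_norm hu
    have hnb : ‖b‖ = 1 := norm_smul_inv_norm hi
    have hnc : ‖cv‖ = 1 := norm_smul_inv_norm hc
    have hab : ⟪a, b⟫ = ⟪u, i⟫ / (‖u‖ * ‖i‖) := by
      rw [ha', hb', real_inner_smul_left, real_inner_smul_right]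
      field_simp
    have hac : ⟪a, cv⟫ = x := by
      rw [ha', hcv', real_inner_smul_left, real_inner_smul_right, hxdef]
      field_simp
    have hbc : ⟪b, cv⟫ = y := by
      rw [hb', hcv', real_inner_smul_left, real_inner_smul_right, hydef]
      field_simp
    have hx1 : |x| ≤ 1 := by
      rw [← hac]; exact (abs_real_inner_le_norm a cv).trans (by rw [hna, hnc]; norm_num)
    have hy1 : |y| ≤ 1 := by
      rw [← hbc]; exact (abs_real_inner_le_norm b cv).trans (by rw [hnb, hnc]; norm_num)
    have key := sph_aux a b cv hna hnb hnc
    rw [hab, hac, hbc] at key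
    have hcosA : Real.cos A = y := Real.cos_arccos (abs_le.mp hy1).1 (abs_le.mp hy1).2
    have hcosB : Real.cos B = x := Real.cos_arccos (abs_le.mp hx1).1 (abs_le.mp hx1).2
    have hsinA : Real.sin A = Real.sqrt (1 - y ^ 2) := Real.sin_arccos y
    have hsinB : Real.sin B = Real.sqrt (1 - x ^ 2) := Real.sin_arccos x
    have key2 : ⟪u, i⟫ / (‖u‖ * ‖i‖) ≤ Real.cos (A - B) := by
      rw [Real.cos_sub, hcosA, hcosB, hsinA, hsinB]
      linarith [key]
    have hB0 : 0 ≤ B := Real.arccos_nonneg x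
    have hApi : A ≤ Real.pi := Real.arccos_le_pi y
    have hmono : Real.cos (A - B) ≤ Real.cos (A - θb) := by
      apply Real.cos_le_cos_of_nonneg_of_le_pi (by linarith [hcase, hb.1]) (by linarith)
      linarith [hbound]
    have : ⟪u, i⟫ / (‖u‖ * ‖i‖) ≤ Real.cos (A - θb) := key2.trans hmono
    calc ⟪u, i⟫ / ‖u‖ = ‖i‖ * (⟪u, i⟫ / (‖u‖ * ‖i‖)) := by field_simp
      _ ≤ ‖i‖ * Real.cos (A - θb) := by
          exact mul_le_mul_of_nonneg_left this hin.le
  · rw [if_neg hcase]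
    rw [div_le_iff₀ hun]
    calc ⟪u, i⟫ ≤ ‖u‖ * ‖i‖ := real_inner_le_norm u i
      _ = ‖i‖ * ‖u‖ := mul_comm _ _
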